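/- arXiv:2312.01541 — 2 statements merged into one kernel-verified Lean document; each statement's English description precedes it below -/
import Mathlib

section
/- The VC dimension of the class of strict equality separators on ℝ² — the class of Boolean-valued functions of the form x ↦ 1[w·x + b = 0] together with those of the form x ↦ 1[w·x + b ≠ 0], over all w ∈ ℝ² and b ∈ ℝ — is exactly 5. -/
/-- Dot product of two vectors in ℝ². -/
noncomputable def dotp (w x : Fin 2 → ℝ) : ℝ := ∑ i, w i * x i

/-- The class of strict equality separators on ℝ²: functions of the form
`x ↦ 1[w·x + b = 0]` together with those of the form `x ↦ 1[w·x + b ≠ 0]`. -/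
def strictEqSep2 : Set ((Fin 2 → ℝ) → Prop) :=
  {h | ∃ w : Fin 2 → ℝ, ∃ b : ℝ,
      h = (fun x => dotp w x + b = 0) ∨ h = (fun x => dotp w x + b ≠ 0)}

/-- A hypothesis class `H` shatters a finite set `S` if every labeling of `S`
is realized by some hypothesis in `H`. -/
def Shatters (H : Set ((Fin 2 → ℝ) → Prop)) (S : Finset (Fin 2 → ℝ)) : Prop :=
  ∀ f : (Fin 2 → ℝ) → Prop, ∃ h ∈ H, ∀ x ∈ S, (h x ↔ f x)

lemma dotp_eq (w x : Fin 2 → ℝ) : dotp w x = w 0 * x 0 + w 1 * x 1 := by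
  simp [dotp, Fin.sum_univ_two]

noncomputable def pt (t : ℝ) : Fin 2 → ℝ := ![t, t ^ 2]

lemma pt_inj : Function.Injective pt := by
  intro s t h
  simpa [pt] using congrFun h 0

noncomputable def I5 : Finset ℝ := {0, 1, 2, 3, 4}

lemma card_I5 : I5.card = 5 := by
  norm_num [I5]

lemma pair_zero (s t u : ℝ) :
    dotp ![-(s + t), 1] (pt u) + s * t = 0 ↔ (u = s ∨ u = t) := by
  have h : dotp ![-(s + t), 1] (pt u) + s * t = (u - s) * (u - t) := by
    rw [dotp_eq]
    show -(s + t) * u + 1 * u ^ 2 + s * t = _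
    ring
  rw [h, mul_eq_zero, sub_eq_zero, sub_eq_zero]

lemma select (V : Finset ℝ) (h2 : V.card ≤ 2) :
    ∃ s t : ℝ, ∀ u ∈ I5, ((u = s ∨ u = t) ↔ u ∈ V) := by
  have h : V.card = 0 ∨ V.card = 1 ∨ V.card = 2 := by omega
  rcases h with h | h | h
  · refine ⟨9, 9, ?_⟩
    rw [Finset.card_eq_zero] at h
    subst h
    intro u hu
    simp only [Finset.notMem_empty, iff_false]
    rintro (rfl | rfl) <;>
      · simp only [I5, Finset.mem_insert, Finset.mem_singleton] at hu
        norm_num at hu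
  · obtain ⟨a, rfl⟩ := Finset.card_eq_one.mp h
    exact ⟨a, a, fun u _ => by simp⟩
  · obtain ⟨a, b, hab, rfl⟩ := Finset.card_eq_two.mp h
    exact ⟨a, b, fun u _ => by simp⟩

lemma lower_bound : ∃ S : Finset (Fin 2 → ℝ), S.card = 5 ∧ Shatters strictEqSep2 S := by
  classical
  refine ⟨I5.image pt, by rw [Finset.card_image_of_injective _ pt_inj, card_I5], ?_⟩
  intro f
  by_cases hc : (I5.filter fun t => f (pt t)).card ≤ 2
  · obtain ⟨s, t, hst⟩ := select _ hc
    refine ⟨fun x => dotp ![-(s + t), 1] x + s * t = 0, ⟨_, _, Or.inl rfl⟩, ?_⟩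
    intro x hx
    obtain ⟨u, hu, rfl⟩ := Finset.mem_image.mp hx
    show dotp ![-(s + t), 1] (pt u) + s * t = 0 ↔ f (pt u)
    rw [pair_zero, hst u hu, Finset.mem_filter]
    exact ⟨fun h => h.2, fun h => ⟨hu, h⟩⟩
  · have hcc : (I5 \ (I5.filter fun t => f (pt t))).card ≤ 2 := by
      have h1 := Finset.card_sdiff_of_subset (Finset.filter_subset (fun t => f (pt t)) I5)
      rw [card_I5] at h1
      omega
    obtain ⟨s, t, hst⟩ := select _ hcc
    refine ⟨fun x => dotp ![-(s + t), 1] x + s * t ≠ 0, ⟨_, _, Or.inr rfl⟩, ?_⟩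
    intro x hx
    obtain ⟨u, hu, rfl⟩ := Finset.mem_image.mp hx
    show dotp ![-(s + t), 1] (pt u) + s * t ≠ 0 ↔ f (pt u)
    rw [ne_eq, pair_zero, hst u hu, Finset.mem_sdiff, Finset.mem_filter]
    constructor
    · intro h
      by_contra hf
      exact h ⟨hu, fun hh => hf hh.2⟩
    · rintro hf ⟨-, hn⟩
      exact hn ⟨hu, hf⟩

lemma line_core (a0 a1 c x0 x1 p0 p1 A0 A1 C : ℝ) (ha : a0 ≠ 0)
    (hdet : a0 * A1 - a1 * A0 = 0)
    (e1 : a0 * x0 + a1 * x1 + c = 0) (e2 : a0 * p0 + a1 * p1 + c = 0)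
    (e3 : A0 * p0 + A1 * p1 + C = 0) : A0 * x0 + A1 * x1 + C = 0 := by
  have h : a0 * (A0 * x0 + A1 * x1 + C) = 0 := by
    linear_combination A0 * e1 - A0 * e2 + a0 * e3 + (x1 - p1) * hdet
  exact (mul_eq_zero.mp h).resolve_left ha

lemma det_zero (u0 u1 w0 w1 W0 W1 : ℝ) (hu : u0 ≠ 0 ∨ u1 ≠ 0)
    (h1 : w0 * u0 + w1 * u1 = 0) (h2 : W0 * u0 + W1 * u1 = 0) :
    w0 * W1 - w1 * W0 = 0 := by
  rcases hu with h | h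
  · have hh : (w0 * W1 - w1 * W0) * u0 = 0 := by linear_combination W1 * h1 - w1 * h2
    exact (mul_eq_zero.mp hh).resolve_right h
  · have hh : (w0 * W1 - w1 * W0) * u1 = 0 := by linear_combination (-W0) * h1 + w0 * h2
    exact (mul_eq_zero.mp hh).resolve_right h

lemma line_imp (w0 w1 b W0 W1 B p0 p1 x0 x1 : ℝ) (hw : w0 ≠ 0 ∨ w1 ≠ 0)
    (hdet : w0 * W1 - w1 * W0 = 0) (hp : w0 * p0 + w1 * p1 + b = 0)
    (hP : W0 * p0 + W1 * p1 + B = 0) (hx : w0 * x0 + w1 * x1 + b = 0) :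
    W0 * x0 + W1 * x1 + B = 0 := by
  rcases hw with h | h
  · exact line_core _ _ _ _ _ _ _ _ _ _ h hdet hx hp hP
  · have := line_core w1 w0 b x1 x0 p1 p0 W1 W0 B h (by linarith) (by linarith)
      (by linarith) (by linarith)
    linarith

lemma ne_comp (w : Fin 2 → ℝ) (hw : w ≠ 0) : w 0 ≠ 0 ∨ w 1 ≠ 0 := by
  by_contra h
  push_neg at h
  apply hw
  funext i
  fin_cases i
  · simpa using h.1
  · simpa using h.2

lemma line_unique (w w' : Fin 2 → ℝ) (b b' : ℝ) (hw : w ≠ 0) (hw' : w' ≠ 0)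
    (p q : Fin 2 → ℝ) (hpq : p ≠ q)
    (hp : dotp w p + b = 0) (hq : dotp w q + b = 0)
    (hp' : dotp w' p + b' = 0) (hq' : dotp w' q + b' = 0) (x : Fin 2 → ℝ) :
    (dotp w x + b = 0 ↔ dotp w' x + b' = 0) := by
  rw [dotp_eq] at hp hq hp' hq'
  rw [dotp_eq, dotp_eq]
  have hu : q 0 - p 0 ≠ 0 ∨ q 1 - p 1 ≠ 0 := by
    obtain ⟨i, hi⟩ := Function.ne_iff.mp hpq
    fin_cases i
    · exact Or.inl (sub_ne_zero_of_ne (Ne.symm hi))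
    · exact Or.inr (sub_ne_zero_of_ne (Ne.symm hi))
  have h1 : w 0 * (q 0 - p 0) + w 1 * (q 1 - p 1) = 0 := by linear_combination hq - hp
  have h2 : w' 0 * (q 0 - p 0) + w' 1 * (q 1 - p 1) = 0 := by linear_combination hq' - hp'
  have hdet : w 0 * w' 1 - w 1 * w' 0 = 0 := det_zero _ _ _ _ _ _ hu h1 h2
  constructor
  · intro hx
    exact line_imp (w 0) (w 1) b (w' 0) (w' 1) b' (p 0) (p 1) (x 0) (x 1)
      (ne_comp w hw) hdet hp hp' hx
  · intro hx
    exact line_imp (w' 0) (w' 1) b' (w 0) (w 1) b (p 0) (p 1) (x 0) (x 1)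
      (ne_comp w' hw') (by linarith) hp' hp hx

/-- `A` is the exact trace on `T` of some genuine line. -/
def goodLine (T A : Finset (Fin 2 → ℝ)) : Prop :=
  ∃ w b, w ≠ (0 : Fin 2 → ℝ) ∧ ∀ x ∈ T, (dotp w x + b = 0 ↔ x ∈ A)

lemma upper_bound (S : Finset (Fin 2 → ℝ)) (hS : Shatters strictEqSep2 S) :
    S.card ≤ 5 := by
  classical
  by_contra hbig
  push_neg at hbig
  obtain ⟨T, hTS, hT6⟩ := Finset.exists_subset_card_eq (show 6 ≤ S.card by omega)
  -- any line trace of size 3 forces a nonzero normal vector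
  have hwne : ∀ (w : Fin 2 → ℝ) (b : ℝ) (B : Finset (Fin 2 → ℝ)), B ⊆ T → B.card = 3 →
      (∀ x ∈ T, (dotp w x + b = 0 ↔ x ∈ B)) → w ≠ 0 := by
    intro w b B hB h3 hiff
    rintro rfl
    by_cases hb : b = 0
    · have hsub : T ⊆ B := fun x hx => (hiff x hx).mp (by simp [dotp, hb])
      have := Finset.card_le_card hsub
      omega
    · obtain ⟨a, ha⟩ := Finset.card_pos.mp (by omega : 0 < B.card)
      have h0 := (hiff a (hB ha)).mpr ha
      simp [dotp] at h0
      exact hb h0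
  -- every 3-subset of T: either it or its complement is a line trace
  have hstep : ∀ A : Finset (Fin 2 → ℝ), A ⊆ T → A.card = 3 →
      goodLine T A ∨ goodLine T (T \ A) := by
    intro A hA h3
    obtain ⟨h, ⟨w, b, hwb⟩, hm⟩ := hS fun x => x ∈ A
    have hm' : ∀ x ∈ T, (h x ↔ x ∈ A) := fun x hx => hm x (hTS hx)
    have hTA : (T \ A).card = 3 := by rw [Finset.card_sdiff_of_subset hA, hT6, h3]
    rcases hwb with rfl | rfl
    · have hiff : ∀ x ∈ T, (dotp w x + b = 0 ↔ x ∈ A) := fun x hx => hm' x hx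
      exact Or.inl ⟨w, b, hwne w b A hA h3 hiff, hiff⟩
    · have hiff : ∀ x ∈ T, (dotp w x + b = 0 ↔ x ∈ T \ A) := by
        intro x hx
        have h' : (dotp w x + b ≠ 0) ↔ x ∈ A := hm' x hx
        rw [Finset.mem_sdiff]
        constructor
        · intro h0
          exact ⟨hx, fun hxa => (h'.mpr hxa) h0⟩
        · rintro ⟨-, hxa⟩
          by_contra h0
          exact hxa (h'.mp h0)
      exact Or.inr ⟨w, b, hwne w b (T \ A) Finset.sdiff_subset hTA hiff, hiff⟩
  -- two line traces sharing two points coincide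
  have huniq : ∀ A B : Finset (Fin 2 → ℝ), A ⊆ T → B ⊆ T → goodLine T A → goodLine T B →
      2 ≤ (A ∩ B).card → A = B := by
    intro A B hA hB hgA hgB h2
    obtain ⟨w, b, hw, hwA⟩ := hgA
    obtain ⟨w', b', hw', hwB⟩ := hgB
    obtain ⟨p, hp, q, hq, hpq⟩ := Finset.one_lt_card.mp (show 1 < (A ∩ B).card by omega)
    have hpA := (Finset.mem_inter.mp hp).1
    have hpB := (Finset.mem_inter.mp hp).2
    have hqA := (Finset.mem_inter.mp hq).1
    have hqB := (Finset.mem_inter.mp hq).2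
    have hpT := hA hpA
    have hqT := hA hqA
    have hl := fun x => line_unique w w' b b' hw hw' p q hpq
      ((hwA p hpT).mpr hpA) ((hwA q hqT).mpr hqA)
      ((hwB p hpT).mpr hpB) ((hwB q hqT).mpr hqB) x
    apply Finset.Subset.antisymm
    · intro x hx
      exact (hwB x (hA hx)).mp ((hl x).mp ((hwA x (hA hx)).mpr hx))
    · intro x hx
      exact (hwA x (hB hx)).mp ((hl x).mpr ((hwB x (hB hx)).mpr hx))
  set G := T.powerset.filter (fun A => A.card = 3 ∧ goodLine T A) with hGdef
  have hmem : ∀ A ∈ G, A ⊆ T ∧ A.card = 3 ∧ goodLine T A := by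
    intro A hA
    simp only [hGdef, Finset.mem_filter, Finset.mem_powerset] at hA
    exact ⟨hA.1, hA.2.1, hA.2.2⟩
  -- |G| ≤ 5 by a pair-packing argument
  have hG5 : G.card ≤ 5 := by
    have hdisj : ∀ A ∈ G, ∀ B ∈ G, A ≠ B →
        Disjoint (Finset.powersetCard 2 A) (Finset.powersetCard 2 B) := by
      intro A hA B hB hne
      rw [Finset.disjoint_left]
      intro P hPA hPB
      rw [Finset.mem_powersetCard] at hPA hPB
      apply hne
      apply huniq A B (hmem A hA).1 (hmem B hB).1 (hmem A hA).2.2 (hmem B hB).2.2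
      calc 2 = P.card := hPA.2.symm
        _ ≤ (A ∩ B).card := Finset.card_le_card (Finset.subset_inter hPA.1 hPB.1)
    have hcard := Finset.card_biUnion hdisj
    have hsub : (G.biUnion fun A => Finset.powersetCard 2 A) ⊆ Finset.powersetCard 2 T := by
      intro P hP
      rw [Finset.mem_biUnion] at hP
      obtain ⟨A, hA, hPA⟩ := hP
      rw [Finset.mem_powersetCard] at hPA ⊢
      exact ⟨hPA.1.trans (hmem A hA).1, hPA.2⟩
    have h15 : (Finset.powersetCard 2 T).card = 15 := by
      rw [Finset.card_powersetCard, hT6]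
      decide
    have heach : ∀ A ∈ G, (Finset.powersetCard 2 A).card = 3 := by
      intro A hA
      rw [Finset.card_powersetCard, (hmem A hA).2.1]
      decide
    have hsum : ∑ A ∈ G, (Finset.powersetCard 2 A).card = G.card * 3 := by
      rw [Finset.sum_congr rfl heach, Finset.sum_const, smul_eq_mul]
    have hle := Finset.card_le_card hsub
    rw [hcard, hsum, h15] at hle
    omega
  -- but G contains at least 10 sets
  obtain ⟨p1, hp1⟩ := Finset.card_pos.mp (by omega : 0 < T.card)
  set F := (Finset.powersetCard 2 (T.erase p1)).image (insert p1) with hFdef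
  have hF10 : F.card = 10 := by
    have hinj : Set.InjOn (insert p1) (Finset.powersetCard 2 (T.erase p1) : Set (Finset (Fin 2 → ℝ))) := by
      intro P hP Q hQ hPQ
      rw [Finset.mem_coe, Finset.mem_powersetCard] at hP hQ
      have hpP : p1 ∉ P := fun h => (Finset.mem_erase.mp (hP.1 h)).1 rfl
      have hpQ : p1 ∉ Q := fun h => (Finset.mem_erase.mp (hQ.1 h)).1 rfl
      rw [← Finset.erase_insert hpP, ← Finset.erase_insert hpQ, hPQ]
    rw [hFdef, Finset.card_image_of_injOn hinj, Finset.card_powersetCard,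
      Finset.card_erase_of_mem hp1, hT6]
    decide
  have hmemF : ∀ A ∈ F, p1 ∈ A ∧ A ⊆ T ∧ A.card = 3 := by
    intro A hA
    rw [hFdef, Finset.mem_image] at hA
    obtain ⟨P, hP, rfl⟩ := hA
    rw [Finset.mem_powersetCard] at hP
    have hpP : p1 ∉ P := fun h => (Finset.mem_erase.mp (hP.1 h)).1 rfl
    refine ⟨Finset.mem_insert_self _ _, ?_, ?_⟩
    · exact Finset.insert_subset hp1 (hP.1.trans (Finset.erase_subset _ _))
    · rw [Finset.card_insert_of_notMem hpP, hP.2]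
  have hφ : ∀ A ∈ F, (if goodLine T A then A else T \ A) ∈ G := by
    intro A hA
    obtain ⟨hp1A, hAT, hA3⟩ := hmemF A hA
    by_cases hg : goodLine T A
    · rw [if_pos hg, hGdef, Finset.mem_filter, Finset.mem_powerset]
      exact ⟨hAT, hA3, hg⟩
    · rw [if_neg hg, hGdef, Finset.mem_filter, Finset.mem_powerset]
      have hgood := (hstep A hAT hA3).resolve_left hg
      exact ⟨Finset.sdiff_subset, by rw [Finset.card_sdiff_of_subset hAT, hT6, hA3], hgood⟩
  have hinjφ : Set.InjOn (fun A => if goodLine T A then A else T \ A) (F : Set (Finset (Fin 2 → ℝ))) := by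
    intro A hA B hB hAB
    simp only at hAB
    obtain ⟨hpA, hAT, -⟩ := hmemF A (Finset.mem_coe.mp hA)
    obtain ⟨hpB, hBT, -⟩ := hmemF B (Finset.mem_coe.mp hB)
    by_cases hgA : goodLine T A <;> by_cases hgB : goodLine T B
    · rwa [if_pos hgA, if_pos hgB] at hAB
    · rw [if_pos hgA, if_neg hgB] at hAB
      exact absurd hpB (Finset.mem_sdiff.mp (hAB ▸ hpA)).2
    · rw [if_neg hgA, if_pos hgB] at hAB
      exact absurd hpA (Finset.mem_sdiff.mp (hAB ▸ hpB)).2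
    · rw [if_neg hgA, if_neg hgB] at hAB
      have h2 := congrArg (fun X => T \ X) hAB
      simp only [Finset.sdiff_sdiff_self_left] at h2
      rwa [Finset.inter_eq_right.mpr hAT, Finset.inter_eq_right.mpr hBT] at h2
  have h10 := Finset.card_le_card_of_injOn _ hφ hinjφ
  rw [hF10] at h10
  omega

/-- The VC dimension of the strict equality separator class on ℝ² is exactly 5:
some set of 5 points is shattered, and no shattered set has more than 5 points. -/
theorem vc_dim_strict_equality_separators_R2 :
    (∃ S : Finset (Fin 2 → ℝ), S.card = 5 ∧ Shatters strictEqSep2 S) ∧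
    (∀ S : Finset (Fin 2 → ℝ), Shatters strictEqSep2 S → S.card ≤ 5) := by
  exact ⟨lower_bound, upper_bound⟩
end

section
/- Any set of 5 distinct points in ℝ² with no three of the points collinear is shattered by the class of strict equality separators: for every labeling of the 5 points by {0,1} there is a function of the form x ↦ 1[w·x + b = 0] or x ↦ 1[w·x + b ≠ 0] (w ∈ ℝ², w ≠ 0, b ∈ ℝ) realizing that labeling on the 5 points. -/
lemma collinear_cross (p q r : Fin 2 → ℝ)
    (h : (q 0 - p 0) * (r 1 - p 1) = (q 1 - p 1) * (r 0 - p 0)) :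
    Collinear ℝ ({p, q, r} : Set (Fin 2 → ℝ)) := by
  rw [collinear_iff_of_mem (Set.mem_insert p _)]
  rcases eq_or_ne q p with rfl | hqp
  · refine ⟨r - q, ?_⟩
    rintro x (rfl | rfl | rfl)
    exacts [⟨0, by simp⟩, ⟨0, by simp⟩, ⟨1, by funext i; simp⟩]
  · refine ⟨q - p, ?_⟩
    have hi : q 0 ≠ p 0 ∨ q 1 ≠ p 1 := by
      by_contra hc
      push_neg at hc
      exact hqp (funext fun i => by fin_cases i <;> simp [hc.1, hc.2])
    rintro x (rfl | rfl | rfl)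
    · exact ⟨0, by simp⟩
    · exact ⟨1, by funext i; simp⟩
    · rcases hi with h0 | h1
      · have h0' : q 0 - p 0 ≠ 0 := sub_ne_zero.mpr h0
        refine ⟨(x 0 - p 0) / (q 0 - p 0), funext fun i => ?_⟩
        fin_cases i <;>
          simp only [Pi.vadd_apply, Pi.smul_apply, Pi.sub_apply, smul_eq_mul,
            vadd_eq_add, Pi.add_apply, Fin.zero_eta, Fin.mk_one] <;> field_simp <;> ring_nf <;> nlinarith [h, h0']
      · have h1' : q 1 - p 1 ≠ 0 := sub_ne_zero.mpr h1
        refine ⟨(x 1 - p 1) / (q 1 - p 1), funext fun i => ?_⟩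
        fin_cases i <;>
          simp only [Pi.vadd_apply, Pi.smul_apply, Pi.sub_apply, smul_eq_mul,
            vadd_eq_add, Pi.add_apply, Fin.zero_eta, Fin.mk_one] <;> field_simp <;> ring_nf <;> nlinarith [h, h1']

lemma line_through (S : Finset (Fin 2 → ℝ))
    (hgen : ∀ a ∈ S, ∀ b ∈ S, ∀ c ∈ S, a ≠ b → a ≠ c → b ≠ c →
      ¬ Collinear ℝ ({a, b, c} : Set (Fin 2 → ℝ)))
    (T : Finset (Fin 2 → ℝ)) (hT : T ⊆ S) (hc : T.card ≤ 2) :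
    ∃ w : Fin 2 → ℝ, w ≠ 0 ∧ ∃ b : ℝ, ∀ x ∈ S, (dotp w x + b = 0 ↔ x ∈ T) := by
  interval_cases h : T.card
  · -- card 0
    have hTe : T = ∅ := Finset.card_eq_zero.mp h
    obtain ⟨b, hb⟩ := Infinite.exists_notMem_finset (S.image fun x => - x 0)
    refine ⟨fun i => if i = 0 then 1 else 0, ?_, b, ?_⟩
    · intro hw
      have := congrFun hw 0
      simp at this
    · intro x hx
      have hdot : dotp (fun i : Fin 2 => if i = 0 then 1 else 0) x = x 0 := by
        simp [dotp, Fin.sum_univ_two]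
      rw [hdot, hTe]
      simp only [Finset.notMem_empty, iff_false]
      intro hzero
      exact hb (Finset.mem_image.mpr ⟨x, hx, by linarith⟩)
  · -- card 1
    obtain ⟨p, rfl⟩ := Finset.card_eq_one.mp h
    have hp : p ∈ S := hT (Finset.mem_singleton_self p)
    obtain ⟨t, ht⟩ := Infinite.exists_notMem_finset
      ((S.erase p).image fun a => -(a 0 - p 0) / (a 1 - p 1))
    set w : Fin 2 → ℝ := fun i => if i = 0 then 1 else t with hw
    have hdot : ∀ x : Fin 2 → ℝ, dotp w x = x 0 + t * x 1 := by
      intro x; simp [dotp, Fin.sum_univ_two, hw]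
    refine ⟨w, ?_, -(dotp w p), ?_⟩
    · intro hw0
      have := congrFun hw0 0
      simp [hw] at this
    · intro x hx
      rw [Finset.mem_singleton]
      constructor
      · intro hz
        rw [hdot, hdot] at hz
        by_contra hxp
        have hx' : x ∈ S.erase p := Finset.mem_erase.mpr ⟨hxp, hx⟩
        rcases eq_or_ne (x 1) (p 1) with h1 | h1
        · have h0 : x 0 = p 0 := by rw [h1] at hz; linarith
          exact hxp (funext fun i => by fin_cases i <;> simp [h0, h1])
        · apply ht
          refine Finset.mem_image.mpr ⟨x, hx', ?_⟩
          have h1' : x 1 - p 1 ≠ 0 := sub_ne_zero.mpr h1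
          field_simp
          linarith
      · rintro rfl; ring
  · -- card 2
    obtain ⟨p, q, hpq, rfl⟩ := Finset.card_eq_two.mp h
    have hp : p ∈ S := hT (by simp)
    have hq : q ∈ S := hT (by simp)
    set w : Fin 2 → ℝ := fun i => if i = 0 then q 1 - p 1 else p 0 - q 0 with hw
    have hdot : ∀ x : Fin 2 → ℝ, dotp w x = (q 1 - p 1) * x 0 + (p 0 - q 0) * x 1 := by
      intro x; simp [dotp, Fin.sum_univ_two, hw]
    refine ⟨w, ?_, -(dotp w p), ?_⟩
    · intro hw0
      have h0 := congrFun hw0 0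
      have h1 := congrFun hw0 1
      simp [hw] at h0 h1
      exact hpq (funext fun i => by fin_cases i <;> simp <;> linarith)
    · intro x hx
      rw [Finset.mem_insert, Finset.mem_singleton, hdot, hdot]
      constructor
      · intro hz
        by_contra hxc
        push_neg at hxc
        obtain ⟨hxp, hxq⟩ := hxc
        have hcross : (q 0 - p 0) * (x 1 - p 1) = (q 1 - p 1) * (x 0 - p 0) := by linarith [hz]
        exact hgen p hp q hq x hx hpq (Ne.symm hxp) (Ne.symm hxq) (collinear_cross p q x hcross)
      · rintro (rfl | rfl) <;> ring

/-- Any 5 distinct points in ℝ² with no three collinear are shattered by the class of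
strict equality separators: every labeling of the 5 points is realized either by a
hypothesis `x ↦ 1[w·x + b = 0]` or by a hypothesis `x ↦ 1[w·x + b ≠ 0]` with `w ≠ 0`. -/
theorem five_points_no_three_collinear_shattered
    (S : Finset (Fin 2 → ℝ)) (hcard : S.card = 5)
    (hgen : ∀ a ∈ S, ∀ b ∈ S, ∀ c ∈ S, a ≠ b → a ≠ c → b ≠ c →
      ¬ Collinear ℝ ({a, b, c} : Set (Fin 2 → ℝ))) :
    ∀ f : (Fin 2 → ℝ) → Prop,
      ∃ w : Fin 2 → ℝ, w ≠ 0 ∧ ∃ b : ℝ,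
        (∀ x ∈ S, (dotp w x + b = 0 ↔ f x)) ∨
        (∀ x ∈ S, (dotp w x + b ≠ 0 ↔ f x)) := by
  intro f
  classical
  set T := S.filter (fun x => f x) with hT
  by_cases hle : T.card ≤ 2
  · obtain ⟨w, hw, b, hb⟩ := line_through S hgen T (Finset.filter_subset _ _) hle
    refine ⟨w, hw, b, Or.inl fun x hx => (hb x hx).trans ?_⟩
    simp [hT, Finset.mem_filter, hx]
  · set T' := S.filter (fun x => ¬ f x) with hT'
    have hsum : T.card + T'.card = S.card := Finset.card_filter_add_card_filter_not _
    have hle' : T'.card ≤ 2 := by omega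
    obtain ⟨w, hw, b, hb⟩ := line_through S hgen T' (Finset.filter_subset _ _) hle'
    refine ⟨w, hw, b, Or.inr fun x hx => ?_⟩
    rw [Ne, hb x hx]
    simp [hT', Finset.mem_filter, hx]
end
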